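/- (Weak lower semi-continuity) Let 0 < η < 1 and M > 0. If xₙ ∈ ℓ² satisfy R_η(xₙ) ≤ M for all n and xₙ converges weakly to x in ℓ², then liminf_n R_η(xₙ) ≥ R_η(x), where R_η(z) = ‖z‖₁² − η‖z‖₂². -/

import Mathlib

open Filter

private lemma finsum_sq_le {ι : Type*} (s : Finset ι) (f : ι → ℝ) (hf : ∀ i, 0 ≤ f i) :
    ∑ i ∈ s, f i ^ 2 ≤ (∑ i ∈ s, f i) ^ 2 := by
  have h : ∀ i ∈ s, f i ^ 2 ≤ f i * ∑ j ∈ s, f j := by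
    intro i hi
    have : f i ≤ ∑ j ∈ s, f j := Finset.single_le_sum (fun j _ => hf j) hi
    nlinarith [hf i]
  calc ∑ i ∈ s, f i ^ 2 ≤ ∑ i ∈ s, f i * ∑ j ∈ s, f j := Finset.sum_le_sum h
    _ = (∑ i ∈ s, f i) ^ 2 := by rw [← Finset.sum_mul]; ring

private lemma tsum_sq_le {ι : Type*} (f : ι → ℝ) (hf : ∀ i, 0 ≤ f i)
    (h1 : Summable f) (h2 : Summable (fun i => f i ^ 2)) :
    ∑' i, f i ^ 2 ≤ (∑' i, f i) ^ 2 := by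
  refine Summable.tsum_le_of_sum_le h2 (fun s => ?_)
  refine (finsum_sq_le s f hf).trans ?_
  have h1' : ∑ i ∈ s, f i ≤ ∑' i, f i := Summable.sum_le_tsum s (fun i _ => hf i) h1
  have h0 : 0 ≤ ∑ i ∈ s, f i := Finset.sum_nonneg (fun i _ => hf i)
  nlinarith

private lemma G_le_R (η : ℝ) (hη0 : 0 ≤ η) (hη1 : η ≤ 1) (z : ℕ → ℝ)
    (h1 : Summable (fun i => |z i|)) (h2 : Summable (fun i => z i ^ 2)) (s : Finset ℕ) :
    (∑ i ∈ s, |z i|) ^ 2 - η * ∑ i ∈ s, z i ^ 2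
      ≤ (∑' i, |z i|) ^ 2 - η * ∑' i, z i ^ 2 := by
  set A := ∑ i ∈ s, |z i| with hA
  set S := ∑ i ∈ s, z i ^ 2 with hS
  have e1 := Summable.sum_add_tsum_compl (s := s) h1
  have e2 := Summable.sum_add_tsum_compl (s := s) h2
  set B := ∑' (i : ((↑s : Set ℕ)ᶜ : Set ℕ)), |z ↑i| with hB
  set C := ∑' (i : ((↑s : Set ℕ)ᶜ : Set ℕ)), z (↑i) ^ 2 with hC
  have hT1 : (∑' i, |z i|) = A + B := e1.symm
  have hT2 : (∑' i, z i ^ 2) = S + C := e2.symm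
  have hBnn : 0 ≤ B := tsum_nonneg (fun i => abs_nonneg _)
  have hCnn : 0 ≤ C := tsum_nonneg (fun i => sq_nonneg _)
  have hAnn : 0 ≤ A := Finset.sum_nonneg (fun i _ => abs_nonneg _)
  have hCB : C ≤ B ^ 2 := by
    have := tsum_sq_le (fun i : ((↑s : Set ℕ)ᶜ : Set ℕ) => |z ↑i|)
      (fun i => abs_nonneg _) (h1.subtype _) ?_
    · simpa [sq_abs] using this
    · have := h2.subtype ((↑s : Set ℕ)ᶜ)
      simp only [sq_abs]; exact this
  rw [hT1, hT2]
  nlinarith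

theorem stmt_5 (η M : ℝ) (hη0 : 0 < η) (hη1 : η < 1) (hM : 0 < M)
    (xn : ℕ → ℕ → ℝ) (x : ℕ → ℝ)
    (hxn1 : ∀ n, Summable (fun i => |xn n i|))
    (hxn2 : ∀ n, Summable (fun i => (xn n i) ^ 2))
    (hx2 : Summable (fun i => (x i) ^ 2))
    (hbound : ∀ n, (∑' i, |xn n i|) ^ 2 - η * ∑' i, (xn n i) ^ 2 ≤ M)
    (hweak : ∀ y : ℕ → ℝ, Summable (fun i => (y i) ^ 2) →
      Tendsto (fun n => ∑' i, xn n i * y i) atTop (nhds (∑' i, x i * y i))) :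
    (∑' i, |x i|) ^ 2 - η * ∑' i, (x i) ^ 2
      ≤ liminf (fun n => (∑' i, |xn n i|) ^ 2 - η * ∑' i, (xn n i) ^ 2) atTop := by
  -- componentwise convergence
  have hcomp : ∀ i, Tendsto (fun n => xn n i) atTop (nhds (x i)) := by
    intro i
    have hy : Summable (fun j => ((if j = i then (1:ℝ) else 0)) ^ 2) := by
      refine summable_of_ne_finset_zero (s := {i}) (fun j hj => ?_)
      simp only [Finset.mem_singleton] at hj
      simp [hj]
    have h := hweak _ hy
    have e1 : ∀ (z : ℕ → ℝ), (∑' j, z j * (if j = i then (1:ℝ) else 0)) = z i := by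
      intro z
      rw [tsum_eq_single i]
      · simp
      · intro b hb; simp [hb]
    simpa only [e1] using h
  -- ℓ² ≤ ℓ¹² for each xn n
  have hT : ∀ n, (∑' i, (xn n i) ^ 2) ≤ (∑' i, |xn n i|) ^ 2 := by
    intro n
    have := tsum_sq_le (fun i => |xn n i|) (fun i => abs_nonneg _) (hxn1 n) ?_
    · simpa [sq_abs] using this
    · simpa [sq_abs] using (hxn2 n)
  have hfnonneg : ∀ n, 0 ≤ (∑' i, |xn n i|) ^ 2 - η * ∑' i, (xn n i) ^ 2 := by
    intro n
    have h2nn : (0:ℝ) ≤ ∑' i, (xn n i) ^ 2 := tsum_nonneg (fun i => sq_nonneg _)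
    nlinarith [hT n]
  -- uniform ℓ¹ bound
  set K := Real.sqrt (M / (1 - η)) with hK
  have hKnn : 0 ≤ K := Real.sqrt_nonneg _
  have hl1bound : ∀ n, (∑' i, |xn n i|) ≤ K := by
    intro n
    have h2nn : (0:ℝ) ≤ ∑' i, (xn n i) ^ 2 := tsum_nonneg (fun i => sq_nonneg _)
    have h1nn : (0:ℝ) ≤ ∑' i, |xn n i| := tsum_nonneg (fun i => abs_nonneg _)
    have hsq : (∑' i, |xn n i|) ^ 2 ≤ M / (1 - η) := by
      rw [le_div_iff₀ (by linarith)]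
      nlinarith [hbound n, hT n]
    rw [hK, show (∑' i, |xn n i|) = Real.sqrt ((∑' i, |xn n i|) ^ 2) by
      rw [Real.sqrt_sq h1nn]]
    exact Real.sqrt_le_sqrt hsq
  -- x ∈ ℓ¹
  have hx1 : Summable (fun i => |x i|) := by
    refine summable_of_sum_range_le (c := K) (fun i => abs_nonneg _) (fun m => ?_)
    have ht : Tendsto (fun n => ∑ i ∈ Finset.range m, |xn n i|) atTop
        (nhds (∑ i ∈ Finset.range m, |x i|)) :=
      tendsto_finset_sum _ (fun i _ => (hcomp i).abs)
    refine le_of_tendsto ht (Eventually.of_forall (fun n => ?_))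
    exact (Summable.sum_le_tsum _ (fun i _ => abs_nonneg _) (hxn1 n)).trans (hl1bound n)
  -- boundedness facts for liminf
  have hcob : IsCoboundedUnder (· ≥ ·) atTop
      (fun n => (∑' i, |xn n i|) ^ 2 - η * ∑' i, (xn n i) ^ 2) :=
    (isBoundedUnder_of ⟨M, fun n => hbound n⟩ :
      IsBoundedUnder (· ≤ ·) atTop _).isCoboundedUnder_ge
  -- per-finset bound on the liminf
  have hkey : ∀ s : Finset ℕ,
      (∑ i ∈ s, |x i|) ^ 2 - η * ∑ i ∈ s, (x i) ^ 2
        ≤ liminf (fun n => (∑' i, |xn n i|) ^ 2 - η * ∑' i, (xn n i) ^ 2) atTop := by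
    intro s
    have hGt : Tendsto (fun n => (∑ i ∈ s, |xn n i|) ^ 2 - η * ∑ i ∈ s, (xn n i) ^ 2)
        atTop (nhds ((∑ i ∈ s, |x i|) ^ 2 - η * ∑ i ∈ s, (x i) ^ 2)) := by
      refine Tendsto.sub ?_ (Tendsto.const_mul _ ?_)
      · exact (tendsto_finset_sum _ (fun i _ => (hcomp i).abs)).pow 2
      · exact tendsto_finset_sum _ (fun i _ => (hcomp i).pow 2)
    have := hGt.liminf_eq
    rw [← this]
    exact liminf_le_liminf (Eventually.of_forall (fun n =>
      G_le_R η hη0.le hη1.le (xn n) (hxn1 n) (hxn2 n) s)) hGt.isBoundedUnder_ge hcob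
  -- pass to the limit over finsets
  have hRt : Tendsto (fun s : Finset ℕ => (∑ i ∈ s, |x i|) ^ 2 - η * ∑ i ∈ s, (x i) ^ 2)
      atTop (nhds ((∑' i, |x i|) ^ 2 - η * ∑' i, (x i) ^ 2)) := by
    refine Tendsto.sub ?_ (Tendsto.const_mul _ ?_)
    · exact (hx1.hasSum).pow 2
    · exact hx2.hasSum
  exact le_of_tendsto hRt (Eventually.of_forall hkey)
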